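/- arXiv:2510.06571 — 2 statements merged into one kernel-verified Lean document; each statement's English description precedes it below -/
import Mathlib

section
/- Let s_r > s̲ where s̲ = s₀ + ε v₀ + (β/α)·∫₀^{s₀}(T₀(x) - T_m)dx ≥ s₀, with ε, β, α, k > 0, v₀ ≥ 0, T₀(x) ≥ T_m. Then the initial control value q(0) = -(k c₂/α)·∫₀^{s₀}(T₀(x)-T_m)dx - (k/β)·(c₁(s₀ - s_r) + c₂ ε v₀) is strictly positive whenever 0 < c₁ ≤ c₂ < c₁·(1 + (s_r - s̲)/(s̲ - s₀)) (with the convention that the upper bound is +∞ when s̲ = s₀). -/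
open Real intervalIntegral

theorem stmt_3 (ε β α k v₀ s₀ s_r Tm c₁ c₂ : ℝ) (T₀ : ℝ → ℝ)
    (hε : 0 < ε) (hβ : 0 < β) (hα : 0 < α) (hk : 0 < k)
    (hv₀ : 0 ≤ v₀) (hs₀ : 0 < s₀)
    (hT₀ : ∀ x ∈ Set.Icc 0 s₀, Tm ≤ T₀ x)
    (hT₀int : IntervalIntegrable (fun x => T₀ x - Tm) MeasureTheory.volume 0 s₀)
    (sunder : ℝ)
    (hsunder : sunder = s₀ + ε * v₀ + (β / α) * ∫ x in (0:ℝ)..s₀, (T₀ x - Tm))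
    (hsr : s_r > sunder)
    (hc₁ : 0 < c₁) (hc₁₂ : c₁ ≤ c₂)
    (hc₂ : sunder ≠ s₀ → c₂ < c₁ * (1 + (s_r - sunder) / (sunder - s₀))) :
    0 < -(k * c₂ / α) * (∫ x in (0:ℝ)..s₀, (T₀ x - Tm))
        - (k / β) * (c₁ * (s₀ - s_r) + c₂ * ε * v₀) := by
  set I := ∫ x in (0:ℝ)..s₀, (T₀ x - Tm) with hIdef
  have hI : 0 ≤ I :=
    intervalIntegral.integral_nonneg hs₀.le (fun x hx => sub_nonneg.mpr (hT₀ x hx))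
  have hd : sunder - s₀ = ε * v₀ + (β / α) * I := by rw [hsunder]; ring
  have hd0 : 0 ≤ sunder - s₀ := by
    rw [hd]
    have h1 : 0 ≤ ε * v₀ := mul_nonneg hε.le hv₀
    have h2 : 0 ≤ (β / α) * I := mul_nonneg (div_pos hβ hα).le hI
    linarith
  have key : c₂ * (sunder - s₀) < c₁ * (s_r - s₀) := by
    rcases eq_or_ne sunder s₀ with h | h
    · rw [h, sub_self, mul_zero]
      exact mul_pos hc₁ (by rw [h] at hsr; linarith)
    · have hpos : 0 < sunder - s₀ := hd0.lt_of_ne (sub_ne_zero.mpr h).symm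
      have hb := hc₂ h
      have : c₁ * (1 + (s_r - sunder) / (sunder - s₀)) = c₁ * (s_r - s₀) / (sunder - s₀) := by
        field_simp
        ring
      rw [this, lt_div_iff₀ hpos] at hb
      linarith
  have hfin : c₂ * (ε * v₀ + (β / α) * I) < c₁ * (s_r - s₀) := by rw [← hd]; exact key
  have heq : -(k * c₂ / α) * I - (k / β) * (c₁ * (s₀ - s_r) + c₂ * ε * v₀)
      = (k / β) * (c₁ * (s_r - s₀) - c₂ * (ε * v₀ + (β / α) * I)) := by
    field_simp
    ring
  rw [heq]
  exact mul_pos (div_pos hk hβ) (by linarith)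
end

section
/- Let q : [0,∞) → ℝ be differentiable, s : [0,∞) → ℝ differentiable with s'(t) ≥ 0, and suppose q'(t) = -c₂·q(t) + (k/β)·(c₂ - c₁)·s'(t) with constants k, β > 0 and 0 < c₁ ≤ c₂, and q(0) > 0. Then q(t) ≥ q(0)·e^{-c₂ t} > 0 for all t ≥ 0. -/
theorem stmt_16 (k β c₁ c₂ : ℝ) (hk : 0 < k) (hβ : 0 < β)
    (hc₁ : 0 < c₁) (hc₁₂ : c₁ ≤ c₂)
    (q s : ℝ → ℝ) (hq : Differentiable ℝ q) (hs : Differentiable ℝ s)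
    (hs' : ∀ t ≥ (0:ℝ), 0 ≤ deriv s t)
    (hode : ∀ t ≥ (0:ℝ), deriv q t = -c₂ * q t + (k/β) * (c₂ - c₁) * deriv s t)
    (hq0 : 0 < q 0) :
    ∀ t ≥ (0:ℝ), q t ≥ q 0 * Real.exp (-c₂ * t) ∧ 0 < q t := by
  set g : ℝ → ℝ := fun t => q t * Real.exp (c₂ * t) with hg
  have hgd : Differentiable ℝ g := by
    exact hq.mul ((differentiable_const c₂).mul differentiable_fun_id).exp
  have hgd' : ∀ t ≥ (0:ℝ), deriv g t =
      (k/β) * (c₂ - c₁) * deriv s t * Real.exp (c₂ * t) := by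
    intro t ht
    have h1 : HasDerivAt (fun t => Real.exp (c₂ * t)) (c₂ * Real.exp (c₂ * t)) t := by
      have := (Real.hasDerivAt_exp (c₂ * t)).comp t
        ((hasDerivAt_id t).const_mul c₂)
      simpa [mul_comm, Function.comp_def] using this
    have h2 : HasDerivAt g (deriv q t * Real.exp (c₂ * t) +
        q t * (c₂ * Real.exp (c₂ * t))) t :=
      ((hq t).hasDerivAt).mul h1
    rw [h2.deriv, hode t ht]
    ring
  have hmono : MonotoneOn g (Set.Ici (0:ℝ)) := by
    apply monotoneOn_of_deriv_nonneg (convex_Ici 0) hgd.continuous.continuousOn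
      (hgd.differentiableOn.mono interior_subset)
    intro t ht
    rw [interior_Ici] at ht
    rw [hgd' t ht.le]
    have hs'' := hs' t ht.le
    have h0 : 0 ≤ k / β := le_of_lt (div_pos hk hβ)
    have h1 : 0 ≤ c₂ - c₁ := sub_nonneg.2 hc₁₂
    positivity
  intro t ht
  have hge : g 0 ≤ g t := hmono Set.self_mem_Ici ht ht
  have hg0 : g 0 = q 0 := by simp [hg]
  have key : q 0 * Real.exp (-c₂ * t) ≤ q t := by
    have := hge
    rw [hg0] at this
    have hexp : (0:ℝ) < Real.exp (c₂ * t) := Real.exp_pos _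
    have : q 0 ≤ q t * Real.exp (c₂ * t) := this
    calc q 0 * Real.exp (-c₂ * t) ≤ q t * Real.exp (c₂ * t) * Real.exp (-c₂ * t) := by
          exact mul_le_mul_of_nonneg_right this (Real.exp_pos _).le
      _ = q t := by
          rw [mul_assoc, ← Real.exp_add]
          simp
  refine ⟨key, lt_of_lt_of_le ?_ key⟩
  positivity
end
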